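/- Let C ⊆ F_q^{9×m} be an F_q-linear rank-metric code representing the non-Pappus q-matroid NP(q). Then dim C = 3m, and the minimum rank distance of C is at least 6; in particular m ≥ 6. -/

import Mathlib

open Matrix

variable {F : Type*} [Field F]

/-- Column space of a matrix: the span of its columns. -/
def colSpace {n m : ℕ} (M : Matrix (Fin n) (Fin m) F) : Submodule F (Fin n → F) :=
  Submodule.span F (Set.range Mᵀ)

lemma colSpace_le_iff {n m : ℕ} (M : Matrix (Fin n) (Fin m) F) (U : Submodule F (Fin n → F)) :
    colSpace M ≤ U ↔ ∀ j, Mᵀ j ∈ U := by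
  rw [colSpace, Submodule.span_le]; exact Set.range_subset_iff

/-- `C(U)`: the codewords of `C` whose column space is contained in `U`. -/
def codeCU {n m : ℕ} (C : Submodule F (Matrix (Fin n) (Fin m) F))
    (U : Submodule F (Fin n → F)) : Submodule F (Matrix (Fin n) (Fin m) F) where
  carrier := {M | M ∈ C ∧ colSpace M ≤ U}
  add_mem' := by
    rintro a b ⟨haC, ha⟩ ⟨hbC, hb⟩
    refine ⟨C.add_mem haC hbC, (colSpace_le_iff _ _).2 fun j => ?_⟩
    have h := U.add_mem ((colSpace_le_iff a U).1 ha j) ((colSpace_le_iff b U).1 hb j)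
    rw [Matrix.transpose_add]; exact h
  zero_mem' := by
    exact ⟨C.zero_mem, (colSpace_le_iff _ _).2 fun j => U.zero_mem⟩
  smul_mem' := by
    rintro c a ⟨haC, ha⟩
    refine ⟨C.smul_mem c haC, (colSpace_le_iff _ _).2 fun j => ?_⟩
    have h := U.smul_mem c ((colSpace_le_iff a U).1 ha j)
    rw [Matrix.transpose_smul]; exact h

/-- Orthogonal complement with respect to the standard (dot-product) bilinear form. -/
def perp {n : ℕ} (U : Submodule F (Fin n → F)) : Submodule F (Fin n → F) where
  carrier := {v | ∀ u ∈ U, v ⬝ᵥ u = 0}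
  add_mem' := by
    intro a b ha hb u hu
    rw [add_dotProduct, ha u hu, hb u hu, add_zero]
  zero_mem' := by
    intro u hu
    rw [zero_dotProduct]
  smul_mem' := by
    intro c a ha u hu
    rw [smul_dotProduct, ha u hu, smul_zero]

/-- The minimum rank distance of a matrix code. -/
noncomputable def minRankDist {n m : ℕ} (C : Submodule F (Matrix (Fin n) (Fin m) F)) : ℕ :=
  sInf {r : ℕ | ∃ M ∈ C, M ≠ 0 ∧ M.rank = r}

/-- The rank function of the q-polymatroid associated to a matrix rank-metric code. -/
noncomputable def rhoCode {n m : ℕ} (C : Submodule F (Matrix (Fin n) (Fin m) F))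
    (U : Submodule F (Fin n → F)) : ℚ :=
  ((Module.finrank F C : ℚ) - (Module.finrank F (codeCU C (perp U)) : ℚ)) / (m : ℚ)

/-- The coordinate 3-space spanned by `e_a, e_b, e_c` in `F_q^9`. -/
def tri (a b c : Fin 9) : Submodule F (Fin 9 → F) :=
  Submodule.span F {Pi.single a 1, Pi.single b 1, Pi.single c 1}

/-- The eight special 3-spaces of the non-Pappus q-matroid. -/
def NPset : Set (Submodule F (Fin 9 → F)) :=
  {tri 0 1 2, tri 0 5 7, tri 0 4 6, tri 1 3 6, tri 1 5 8, tri 2 3 7, tri 2 4 8, tri 3 4 5}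

open scoped Classical in
/-- The rank function of the non-Pappus q-matroid. -/
noncomputable def rhoNP (U : Submodule F (Fin 9 → F)) : ℚ :=
  if U ∈ (NPset : Set (Submodule F (Fin 9 → F))) then 2
  else if Module.finrank F U ≤ 3 then (Module.finrank F U : ℚ) else 3



section Aux

open Module

lemma toDual_eq_dot {n : ℕ} (v u : Fin n → F) :
    (Pi.basisFun F (Fin n)).toDual v u = v ⬝ᵥ u := by
  conv_lhs => rw [← (Pi.basisFun F (Fin n)).sum_repr u]
  rw [map_sum]
  simp [← Pi.basisFun_apply, Basis.toDual_apply_left, dotProduct, mul_comm]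

lemma mem_perp_iff {n : ℕ} {U : Submodule F (Fin n → F)} {v : Fin n → F} :
    v ∈ perp U ↔ ∀ u ∈ U, v ⬝ᵥ u = 0 := Iff.rfl

lemma perp_eq_comap {n : ℕ} (U : Submodule F (Fin n → F)) :
    perp U = U.dualAnnihilator.comap (Pi.basisFun F (Fin n)).toDualEquiv.toLinearMap := by
  ext v
  simp only [mem_perp_iff, Submodule.mem_comap, Submodule.mem_dualAnnihilator,
    LinearEquiv.coe_coe, Basis.toDualEquiv_apply]
  constructor
  · intro h u hu; rw [toDual_eq_dot]; exact h u hu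
  · intro h u hu; rw [← toDual_eq_dot]; exact h u hu

lemma finrank_add_finrank_perp {n : ℕ} (U : Submodule F (Fin n → F)) :
    Module.finrank F U + Module.finrank F (perp U) = n := by
  have h1 : Module.finrank F (perp U) = Module.finrank F U.dualAnnihilator := by
    rw [perp_eq_comap, Submodule.comap_equiv_eq_map_symm, LinearEquiv.finrank_map_eq]
  have h2 := LinearEquiv.finrank_eq (R := F) (M := (Fin n → F) ⧸ U)
    (N := U.dualAnnihilator) (Subspace.quotEquivAnnihilator U)
  have h3 := Submodule.finrank_quotient_add_finrank U
  rw [h1, ← h2, add_comm, h3]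
  simp

lemma perp_top {n : ℕ} : perp (⊤ : Submodule F (Fin n → F)) = ⊥ := by
  refine le_antisymm ?_ bot_le
  intro v hv
  rw [Submodule.mem_bot]
  funext i
  simpa using hv (Pi.single i 1) trivial

lemma mem_codeCU_iff {n m : ℕ} {C : Submodule F (Matrix (Fin n) (Fin m) F)}
    {U : Submodule F (Fin n → F)} {M : Matrix (Fin n) (Fin m) F} :
    M ∈ codeCU C U ↔ M ∈ C ∧ colSpace M ≤ U := Iff.rfl

lemma codeCU_bot {n m : ℕ} (C : Submodule F (Matrix (Fin n) (Fin m) F)) :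
    codeCU C (⊥ : Submodule F (Fin n → F)) = ⊥ := by
  refine le_antisymm ?_ bot_le
  rintro M ⟨-, h⟩
  rw [colSpace_le_iff] at h
  rw [Submodule.mem_bot]
  ext i j
  have h2 := h j
  rw [Submodule.mem_bot] at h2
  calc M i j = Mᵀ j i := rfl
    _ = 0 := by rw [h2]; rfl

lemma rank_eq_finrank_colSpace {n m : ℕ} (M : Matrix (Fin n) (Fin m) F) :
    M.rank = Module.finrank F (colSpace M) := by
  rw [Matrix.rank, Matrix.range_mulVecLin, colSpace]; rfl

lemma le_perp_perp {n : ℕ} (U : Submodule F (Fin n → F)) : U ≤ perp (perp U) := by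
  intro v hv w hw
  rw [dotProduct_comm]
  exact hw v hv

lemma finrank_tri_le (a b c : Fin 9) :
    Module.finrank F (tri a b c : Submodule F (Fin 9 → F)) ≤ 3 := by
  classical
  have h := finrank_span_le_card (R := F)
    ({Pi.single a 1, Pi.single b 1, Pi.single c 1} : Set (Fin 9 → F))
  refine le_trans h ?_
  rw [Set.toFinset_insert, Set.toFinset_insert, Set.toFinset_singleton]
  refine le_trans (Finset.card_insert_le _ _) ?_
  have h2 := Finset.card_insert_le (Pi.single b (1 : F))
    ({Pi.single c 1} : Finset (Fin 9 → F))
  simp only [Finset.card_singleton] at h2 ⊢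
  omega

lemma finrank_tri012 : Module.finrank F (tri 0 1 2 : Submodule F (Fin 9 → F)) = 3 := by
  classical
  set f : Fin 3 → Fin 9 := ![0, 1, 2] with hf
  have hinj : Function.Injective f := by decide
  have li : LinearIndependent F ((Pi.basisFun F (Fin 9)) ∘ f) :=
    (Pi.basisFun F (Fin 9)).linearIndependent.comp f hinj
  have hrange : Set.range ((Pi.basisFun F (Fin 9)) ∘ f) =
      ({Pi.single 0 1, Pi.single 1 1, Pi.single 2 1} : Set (Fin 9 → F)) := by
    ext v
    simp only [Set.mem_range, Function.comp_apply, Pi.basisFun_apply,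
      Set.mem_insert_iff, Set.mem_singleton_iff]
    constructor
    · rintro ⟨i, rfl⟩
      fin_cases i <;> simp [hf]
    · rintro (rfl | rfl | rfl)
      · exact ⟨0, by simp [hf]⟩
      · exact ⟨1, by simp [hf]⟩
      · exact ⟨2, by simp [hf]⟩
  have hcard := finrank_span_eq_card (R := F) li
  rw [hrange] at hcard
  rw [tri, hcard]
  simp

lemma npset_finrank_le {X : Submodule F (Fin 9 → F)}
    (h : X ∈ (NPset : Set (Submodule F (Fin 9 → F)))) :
    Module.finrank F X ≤ 3 := by
  simp only [NPset, Set.mem_insert_iff, Set.mem_singleton_iff] at h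
  rcases h with rfl | rfl | rfl | rfl | rfl | rfl | rfl | rfl <;> exact finrank_tri_le _ _ _

end Aux

/-- any code representing the non-Pappus q-matroid has dimension `3m`,
minimum rank distance at least `6`, and in particular `m ≥ 6`. -/
theorem nonPappus_code_basic [Fintype F] {m : ℕ} (hm : 0 < m)
    (C : Submodule F (Matrix (Fin 9) (Fin m) F))
    (hrep : ∀ U : Submodule F (Fin 9 → F), rhoCode C U = rhoNP U) :
    Module.finrank F C = 3 * m ∧ (∀ M ∈ C, M ≠ 0 → 6 ≤ M.rank) ∧ 6 ≤ m := by
  classical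
  have hfin9 : Module.finrank F (Fin 9 → F) = 9 := by simp
  have hm' : (m : ℚ) ≠ 0 := Nat.cast_ne_zero.mpr hm.ne'
  -- Step 1: dim C = 3m
  have hdim : Module.finrank F C = 3 * m := by
    have htop : (⊤ : Submodule F (Fin 9 → F)) ∉ (NPset : Set (Submodule F (Fin 9 → F))) := by
      intro h
      have h1 := npset_finrank_le h
      rw [finrank_top, hfin9] at h1
      omega
    have htopfr : ¬ (Module.finrank F (⊤ : Submodule F (Fin 9 → F)) ≤ 3) := by
      rw [finrank_top, hfin9]; omega
    have h := hrep ⊤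
    rw [rhoCode, perp_top, codeCU_bot] at h
    rw [rhoNP, if_neg htop, if_neg htopfr] at h
    rw [div_eq_iff hm'] at h
    simp only [finrank_bot, Nat.cast_zero, sub_zero] at h
    have : (Module.finrank F C : ℚ) = ((3 * m : ℕ) : ℚ) := by push_cast; linarith
    exact_mod_cast this
  -- Step 2: minimum rank distance ≥ 6
  have hdist : ∀ M ∈ C, M ≠ 0 → 6 ≤ M.rank := by
    intro M hMC hM0
    by_contra hlt
    push_neg at hlt
    have hcs : Module.finrank F (colSpace M) ≤ 5 := by
      rw [← rank_eq_finrank_colSpace]; omega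
    have hsum := finrank_add_finrank_perp (colSpace M)
    have hUfr : 4 ≤ Module.finrank F (perp (colSpace M)) := by omega
    have hUnot : perp (colSpace M) ∉ (NPset : Set (Submodule F (Fin 9 → F))) := by
      intro h
      have := npset_finrank_le h
      omega
    have hUfr' : ¬ (Module.finrank F (perp (colSpace M)) ≤ 3) := by omega
    have h := hrep (perp (colSpace M))
    rw [rhoCode, rhoNP, if_neg hUnot, if_neg hUfr', hdim, div_eq_iff hm'] at h
    have hd0 : Module.finrank F (codeCU C (perp (perp (colSpace M)))) = 0 := by
      have : (Module.finrank F (codeCU C (perp (perp (colSpace M)))) : ℚ) = 0 := by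
        push_cast at h; linarith
      exact_mod_cast this
    have hbot : codeCU C (perp (perp (colSpace M))) = ⊥ := Submodule.finrank_eq_zero.mp hd0
    have hmem : M ∈ codeCU C (perp (perp (colSpace M))) := ⟨hMC, le_perp_perp (colSpace M)⟩
    rw [hbot, Submodule.mem_bot] at hmem
    exact hM0 hmem
  refine ⟨hdim, hdist, ?_⟩
  -- Step 3: m ≥ 6
  have hXmem : (tri 0 1 2 : Submodule F (Fin 9 → F)) ∈
      (NPset : Set (Submodule F (Fin 9 → F))) := Set.mem_insert _ _
  have h := hrep (tri 0 1 2)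
  rw [rhoCode, rhoNP, if_pos hXmem, hdim, div_eq_iff hm'] at h
  have hdm : Module.finrank F (codeCU C (perp (tri 0 1 2))) = m := by
    have : (Module.finrank F (codeCU C (perp (tri 0 1 2))) : ℚ) = (m : ℚ) := by
      push_cast at h; linarith
    exact_mod_cast this
  have hne : codeCU C (perp (tri 0 1 2)) ≠ ⊥ := by
    intro hb
    rw [hb, finrank_bot] at hdm
    omega
  obtain ⟨M, hMmem, hM0⟩ := (Submodule.ne_bot_iff _).mp hne
  obtain ⟨hMC, hMcol⟩ := hMmem
  have hperpX : Module.finrank F (perp (tri 0 1 2 : Submodule F (Fin 9 → F))) = 6 := by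
    have h1 := finrank_add_finrank_perp (tri 0 1 2 : Submodule F (Fin 9 → F))
    have h2 : Module.finrank F (tri 0 1 2 : Submodule F (Fin 9 → F)) = 3 := finrank_tri012
    omega
  have hrk : M.rank ≤ 6 := by
    rw [rank_eq_finrank_colSpace]
    calc Module.finrank F (colSpace M)
        ≤ Module.finrank F (perp (tri 0 1 2 : Submodule F (Fin 9 → F))) :=
          Submodule.finrank_mono hMcol
      _ = 6 := hperpX
  have hrk2 : M.rank ≤ m := by
    have := Matrix.rank_le_card_width M
    simpa using this
  have h6 := hdist M hMC hM0
  omega
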